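/- Let A be a Lie triple algebra with idempotent e ≠ 0 and Peirce decomposition A = A_e(1) ⊕ A_e(1/2) ⊕ A_e(0). For λ ∈ {0,1}, the set J_λ = {x ∈ A_e(λ) : x·A_e(1/2) = 0} is an ideal of A_e(λ), and J = J_0 ⊕ J_1 is an ideal of A that is invariant under every derivation of A. -/
import Mathlib

set_option linter.unusedSectionVars false
set_option maxHeartbeats 1000000
section
variable {K A : Type*} [Field K] [NonUnitalNonAssocCommRing A]
    [Module K A] [SMulCommClass K A A] [IsScalarTower K A A]

private lemma canc2' (h2 : (2:K) ≠ 0) {a : A} (h : (2:K) • a = 0) : a = 0 := by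
  have := congrArg (fun t => (2:K)⁻¹ • t) h
  simpa [smul_smul, inv_mul_cancel₀ h2] using this

private lemma lemA' (h2 : (2:K) ≠ 0)
    (hK : ∀ x y : A, (2:K) • (x * (x * (x * y))) + y * (x * (x * x)) = (3:K) • (x * (y * (x * x))))
    (p u y : A) :
    (2:K)•(p*(p*(u*y))) + (2:K)•(p*(u*(p*y))) + (2:K)•(u*(p*(p*y)))
      + y*(u*(p*p)) + y*(p*(u*p)) + y*(p*(p*u))
      - (3:K)•(u*(y*(p*p))) - (3:K)•(p*(y*(u*p))) - (3:K)•(p*(y*(p*u))) = 0 := by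
  apply canc2' h2
  have h1 := hK (p+u) y
  have h3 := hK (p-u) y
  have h4 := hK u y
  linear_combination (norm := (simp only [mul_add, add_mul, mul_sub, sub_mul]; module)) h1 - h3 - (2:K) • h4

private lemma lemT' (h2 : (2:K) ≠ 0)
    (hK : ∀ x y : A, (2:K) • (x * (x * (x * y))) + y * (x * (x * x)) = (3:K) • (x * (y * (x * x))))
    (u v w y : A) :
    (2:K)•(v*(w*(u*y))) + (2:K)•(w*(v*(u*y)))
    + (2:K)•(v*(u*(w*y))) + (2:K)•(w*(u*(v*y)))
    + (2:K)•(u*(v*(w*y))) + (2:K)•(u*(w*(v*y)))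
    + y*(u*(v*w)) + y*(u*(w*v))
    + y*(v*(u*w)) + y*(w*(u*v))
    + y*(v*(w*u)) + y*(w*(v*u))
    - (3:K)•(u*(y*(v*w))) - (3:K)•(u*(y*(w*v)))
    - (3:K)•(v*(y*(u*w))) - (3:K)•(w*(y*(u*v)))
    - (3:K)•(v*(y*(w*u))) - (3:K)•(w*(y*(v*u))) = 0 := by
  have h1 := lemA' h2 hK (v+w) u y
  have h3 := lemA' h2 hK v u y
  have h4 := lemA' h2 hK w u y
  linear_combination (norm := (simp only [mul_add, add_mul]; module)) h1 - h3 - h4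

private lemma hcube' (hK : ∀ x y : A, (2:K) • (x * (x * (x * y))) + y * (x * (x * x)) = (3:K) • (x * (y * (x * x))))
    {e : A} (hee : e * e = e) (y : A) :
    (2:K)•(e*(e*(e*y))) + e*y = (3:K)•(e*(e*y)) := by
  have h := hK e y
  simp only [hee] at h
  rwa [mul_comm y e] at h

private lemma rule00' (h2 : (2:K) ≠ 0)
    (hK : ∀ x y : A, (2:K) • (x * (x * (x * y))) + y * (x * (x * x)) = (3:K) • (x * (y * (x * x))))
    {e u y : A} (hee : e * e = e) (hu : e * u = 0) (hy : e * y = 0) :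
    e * (u * y) = 0 := by
  have hA := lemA' h2 hK e u y
  simp only [hee, mul_comm u e, mul_comm y e, hu, hy, mul_comm y u,
    mul_smul_comm, smul_mul_assoc, mul_zero, zero_mul, smul_zero,
    add_zero, zero_add, sub_zero, zero_sub] at hA
  have hL2 := canc2' h2 hA
  have hc := hcube' hK hee (u*y)
  rw [hL2] at hc
  simpa using hc

private lemma rule11' (h2 : (2:K) ≠ 0)
    (hK : ∀ x y : A, (2:K) • (x * (x * (x * y))) + y * (x * (x * x)) = (3:K) • (x * (y * (x * x))))
    {e u y : A} (hee : e * e = e) (hu : e * u = u) (hy : e * y = y) :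
    e * (u * y) = u * y := by
  have hA := lemA' h2 hK e u y
  simp only [hee, mul_comm u e, mul_comm y e, hu, hy, mul_comm y u,
    mul_smul_comm, smul_mul_assoc, mul_zero, zero_mul, smul_zero,
    add_zero, zero_add, sub_zero, zero_sub] at hA
  have hA' := congrArg (fun t => e * t) hA
  simp only [mul_add, mul_sub, mul_smul_comm, mul_zero] at hA'
  have hc := hcube' hK hee (u*y)
  have key : (2:K) • (e*(u*y) - u*y) = 0 := by
    linear_combination (norm := module) (-1:K) • hA + (-2:K) • hA' + (2:K) • hc
  exact sub_eq_zero.mp (canc2' h2 key)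

private lemma rule10' (h2 : (2:K) ≠ 0)
    (hK : ∀ x y : A, (2:K) • (x * (x * (x * y))) + y * (x * (x * x)) = (3:K) • (x * (y * (x * x))))
    {e u y : A} (hee : e * e = e) (hu : e * u = u) (hy : e * y = 0) :
    u * y = 0 := by
  have hA1 := lemA' h2 hK e y u
  simp only [hee, mul_comm u e, mul_comm y e, hu, hy, mul_comm y u,
    mul_smul_comm, smul_mul_assoc, mul_zero, zero_mul, smul_zero,
    add_zero, zero_add, sub_zero, zero_sub] at hA1
  have hA2 := lemA' h2 hK e u y
  simp only [hee, mul_comm u e, mul_comm y e, hu, hy, mul_comm y u,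
    mul_smul_comm, smul_mul_assoc, mul_zero, zero_mul, smul_zero,
    add_zero, zero_add, sub_zero, zero_sub] at hA2
  have hA1' := congrArg (fun t => e * t) hA1
  simp only [mul_add, mul_sub, mul_smul_comm, mul_zero] at hA1'
  have hA2' := congrArg (fun t => e * t) hA2
  simp only [mul_add, mul_sub, mul_smul_comm, mul_zero] at hA2'
  have key : (2:K) • ((2:K) • (u*y)) = 0 := by
    linear_combination (norm := module) (5:K) • hA1 + (3:K) • hA2 + (-2:K) • hA1' + (2:K) • hA2'
  exact canc2' h2 (canc2' h2 key)

private lemma ruleH0' (h2 : (2:K) ≠ 0)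
    (hK : ∀ x y : A, (2:K) • (x * (x * (x * y))) + y * (x * (x * x)) = (3:K) • (x * (y * (x * x))))
    {e u y : A} (hee : e * e = e) (hu : e * u = 0) (hy : e * y = (2:K)⁻¹ • y) :
    e * (u * y) = (2:K)⁻¹ • (u * y) := by
  have hA := lemA' h2 hK e u y
  simp only [hee, mul_comm u e, mul_comm y e, hu, hy, mul_comm y u,
    mul_smul_comm, smul_mul_assoc, mul_zero, zero_mul, smul_zero,
    add_zero, zero_add, sub_zero, zero_sub] at hA
  have hA' := congrArg (fun t => e * t) hA
  simp only [mul_add, mul_sub, mul_smul_comm, mul_zero] at hA'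
  have hc := hcube' hK hee (u*y)
  have key : (2:K) • ((2:K) • (e*(u*y)) - u*y) = 0 := by
    linear_combination (norm := (match_scalars <;> field_simp <;> ring1)) (2:K) • hA + (-1:K) • hA' + hc
  have key2 := sub_eq_zero.mp (canc2' h2 key)
  have := congrArg (fun t => (2:K)⁻¹ • t) key2
  simpa [smul_smul, inv_mul_cancel₀ h2] using this

private lemma ruleH1' (h2 : (2:K) ≠ 0)
    (hK : ∀ x y : A, (2:K) • (x * (x * (x * y))) + y * (x * (x * x)) = (3:K) • (x * (y * (x * x))))
    {e u y : A} (hee : e * e = e) (hu : e * u = u) (hy : e * y = (2:K)⁻¹ • y) :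
    e * (u * y) = (2:K)⁻¹ • (u * y) := by
  have hA := lemA' h2 hK e u y
  simp only [hee, mul_comm u e, mul_comm y e, hu, hy, mul_comm y u,
    mul_smul_comm, smul_mul_assoc, mul_zero, zero_mul, smul_zero,
    add_zero, zero_add, sub_zero, zero_sub] at hA
  have hA' := congrArg (fun t => e * t) hA
  simp only [mul_add, mul_sub, mul_smul_comm, mul_zero] at hA'
  have hc := hcube' hK hee (u*y)
  have key : (2:K) • ((2:K) • (e*(u*y)) - u*y) = 0 := by
    linear_combination (norm := (match_scalars <;> field_simp <;> ring1)) (-1:K) • hA + (-1:K) • hA' + hc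
  have key2 := sub_eq_zero.mp (canc2' h2 key)
  have := congrArg (fun t => (2:K)⁻¹ • t) key2
  simpa [smul_smul, inv_mul_cancel₀ h2] using this


/-- core of part 1, case λ = 0 -/
private lemma core0 (h2 : (2:K) ≠ 0)
    (hK : ∀ x y : A, (2:K) • (x * (x * (x * y))) + y * (x * (x * x)) = (3:K) • (x * (y * (x * x))))
    {e x a z : A} (hee : e * e = e) (hx1 : e * x = 0)
    (hx2 : ∀ w : A, e * w = (2:K)⁻¹ • w → x * w = 0)
    (ha : e * a = 0) (hz : e * z = (2:K)⁻¹ • z) :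
    (x * a) * z = 0 := by
  have hb : e * (x * a) = 0 := rule00' h2 hK hee hx1 ha
  have hs : e * (a * z) = (2:K)⁻¹ • (a * z) := ruleH0' h2 hK hee ha hz
  have hxs : x * (a * z) = 0 := hx2 (a*z) hs
  have hxz : x * z = 0 := hx2 z hz
  have hw : e * ((x * a) * z) = (2:K)⁻¹ • ((x * a) * z) := ruleH0' h2 hK hee hb hz
  have hT := lemT' h2 hK x a z e
  simp only [mul_comm x e, mul_comm a e, mul_comm z e, mul_comm z a, mul_comm a x,
    mul_comm z x, mul_comm z (x*a), hx1, ha, hz, hxz, hxs, hb, hs, hw,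
    mul_smul_comm, smul_mul_assoc, mul_zero, zero_mul, smul_zero,
    add_zero, zero_add, sub_zero, zero_sub, neg_zero] at hT
  linear_combination (norm := (match_scalars <;> field_simp <;> try ring1)) hT

/-- core of part 1, case λ = 1 -/
private lemma core1 (h2 : (2:K) ≠ 0)
    (hK : ∀ x y : A, (2:K) • (x * (x * (x * y))) + y * (x * (x * x)) = (3:K) • (x * (y * (x * x))))
    {e x a z : A} (hee : e * e = e) (hx1 : e * x = x)
    (hx2 : ∀ w : A, e * w = (2:K)⁻¹ • w → x * w = 0)
    (ha : e * a = a) (hz : e * z = (2:K)⁻¹ • z) :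
    (x * a) * z = 0 := by
  have hb : e * (x * a) = x * a := rule11' h2 hK hee hx1 ha
  have hs : e * (a * z) = (2:K)⁻¹ • (a * z) := ruleH1' h2 hK hee ha hz
  have hxs : x * (a * z) = 0 := hx2 (a*z) hs
  have hxz : x * z = 0 := hx2 z hz
  have hw : e * ((x * a) * z) = (2:K)⁻¹ • ((x * a) * z) := ruleH1' h2 hK hee hb hz
  have hT := lemT' h2 hK x a z e
  simp only [mul_comm x e, mul_comm a e, mul_comm z e, mul_comm z a, mul_comm a x,
    mul_comm z x, mul_comm z (x*a), hx1, ha, hz, hxz, hxs, hb, hs, hw,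
    mul_smul_comm, smul_mul_assoc, mul_zero, zero_mul, smul_zero,
    add_zero, zero_add, sub_zero, zero_sub, neg_zero] at hT
  linear_combination (norm := (match_scalars <;> field_simp <;> try ring1)) (-1:K) • hT


/-- uniqueness of Peirce components -/
private lemma uniq' (h2 : (2:K) ≠ 0) {e u1 uh u0 : A}
    (h1 : e * u1 = u1) (hh : e * uh = (2:K)⁻¹ • uh) (h0 : e * u0 = 0)
    (hsum : u1 + uh + u0 = 0) : u1 = 0 ∧ uh = 0 ∧ u0 = 0 := by
  have l1 := congrArg (fun t => e * t) hsum
  simp only [mul_add, h1, hh, h0, add_zero, mul_zero] at l1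
  have l2 := congrArg (fun t => e * t) l1
  simp only [mul_add, mul_smul_comm, h1, hh, mul_zero] at l2
  -- l1 : u1 + 2⁻¹ • uh = 0 ;  l2 : u1 + 2⁻¹ • 2⁻¹ • uh = 0
  have s1 : ∀ v : A, (2:K) • ((2:K)⁻¹ • v) = v := fun v => by
    rw [smul_smul, mul_inv_cancel₀ h2, one_smul]
  have huh : uh = 0 := by
    have hsub : (2:K)⁻¹ • uh - (2:K)⁻¹ • ((2:K)⁻¹ • uh) = 0 := by
      linear_combination (norm := module) l1 - l2
    have ha2 := congrArg (fun t => (2:K) • t) hsub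
    simp only [smul_sub, smul_zero, s1] at ha2
    have hb2 := congrArg (fun t => (2:K) • t) ha2
    simp only [smul_sub, smul_zero, s1, two_smul] at hb2
    rwa [add_sub_cancel_right] at hb2
  have hu1 : u1 = 0 := by
    have := l1
    rw [huh, smul_zero, add_zero] at this
    exact this
  refine ⟨hu1, huh, ?_⟩
  have := hsum
  rw [hu1, huh, zero_add, zero_add] at this
  exact this

end



/-- x belongs to J_λ = {x ∈ A_e(λ) : x·A_e(1/2) = 0}. -/
def memJ {K A : Type*} [Field K] [NonUnitalNonAssocCommRing A]
    [Module K A] (e x : A) (lam : K) : Prop :=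
  e * x = lam • x ∧ ∀ z : A, e * z = (2 : K)⁻¹ • z → x * z = 0

/-- For a Lie triple algebra with nonzero idempotent e:
J_λ is an ideal of A_e(λ) for λ ∈ {0,1}, J = J_0 ⊕ J_1 is an ideal of A, and
J is invariant under every derivation of A. -/
theorem J_characteristic_ideal {K A : Type*} [Field K] [NonUnitalNonAssocCommRing A]
    [Module K A] [SMulCommClass K A A] [IsScalarTower K A A]
    (h2 : (2 : K) ≠ 0)
    (hLT : ∀ x y : A, 2 • (x * (x * (x * y))) + y * (x * (x * x)) = 3 • (x * (y * (x * x))))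
    (e : A) (he : e ≠ 0) (hee : e * e = e)
    (hdecomp : ∀ x : A, ∃ x1 xh x0 : A,
      e * x1 = x1 ∧ e * xh = (2 : K)⁻¹ • xh ∧ e * x0 = 0 ∧ x = x1 + xh + x0) :
    (∀ lam : K, (lam = 0 ∨ lam = 1) →
      ∀ x a : A, memJ e x lam → e * a = lam • a → memJ e (x * a) lam) ∧
    (∀ a x0 x1 : A, memJ e x0 (0 : K) → memJ e x1 (1 : K) →
      ∃ y0 y1 : A, memJ e y0 (0 : K) ∧ memJ e y1 (1 : K) ∧ a * (x0 + x1) = y0 + y1) ∧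
    (∀ d : A →ₗ[K] A, (∀ x y : A, d (x * y) = d x * y + x * d y) →
      ∀ x0 x1 : A, memJ e x0 (0 : K) → memJ e x1 (1 : K) →
        ∃ y0 y1 : A, memJ e y0 (0 : K) ∧ memJ e y1 (1 : K) ∧ d (x0 + x1) = y0 + y1) := by
  
  have hK : ∀ x y : A, (2:K) • (x*(x*(x*y))) + y*(x*(x*x)) = (3:K) • (x*(y*(x*x))) := by
    intro x y
    have c2 : (2:K) • (x*(x*(x*y))) = 2 • (x*(x*(x*y))) := by
      rw [← Nat.cast_smul_eq_nsmul K 2]; norm_num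
    have c3 : (3:K) • (x*(y*(x*x))) = 3 • (x*(y*(x*x))) := by
      rw [← Nat.cast_smul_eq_nsmul K 3]; norm_num
    rw [c2, c3]; exact hLT x y
  -- part 1 as reusable fact
  have part1 : ∀ lam : K, (lam = 0 ∨ lam = 1) →
      ∀ x a : A, memJ e x lam → e * a = lam • a → memJ e (x * a) lam := by
    rintro lam (rfl | rfl) x a ⟨hx1, hx2⟩ ha
    · rw [zero_smul] at hx1 ha
      constructor
      · rw [zero_smul]; exact rule00' h2 hK hee hx1 ha
      · intro z hz; exact core0 h2 hK hee hx1 hx2 ha hz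
    · rw [one_smul] at hx1 ha
      constructor
      · rw [one_smul]; exact rule11' h2 hK hee hx1 ha
      · intro z hz; exact core1 h2 hK hee hx1 hx2 ha hz
  refine ⟨part1, ?_, ?_⟩
  · -- part 2 : J is an ideal
    intro a x0 x1 hx0 hx1
    obtain ⟨a1, ah, a0, ha1, hah, ha0, rfl⟩ := hdecomp a
    have hx0e : e * x0 = 0 := by have := hx0.1; rwa [zero_smul] at this
    have hx1e : e * x1 = x1 := by have := hx1.1; rwa [one_smul] at this
    refine ⟨a0 * x0, a1 * x1, ?_, ?_, ?_⟩
    · exact part1 0 (Or.inl rfl) x0 a0 hx0 (by rw [zero_smul]; exact ha0) |>.imp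
        (fun h => by rwa [mul_comm a0 x0]) (fun h w hw => by rw [mul_comm a0 x0]; exact h w hw)
    · exact part1 1 (Or.inr rfl) x1 a1 hx1 (by rw [one_smul]; exact ha1) |>.imp
        (fun h => by rwa [mul_comm a1 x1]) (fun h w hw => by rw [mul_comm a1 x1]; exact h w hw)
    · have e1 : a1 * x0 = 0 := rule10' h2 hK hee ha1 hx0e
      have e2 : ah * x0 = 0 := by rw [mul_comm]; exact hx0.2 ah hah
      have e3 : ah * x1 = 0 := by rw [mul_comm]; exact hx1.2 ah hah
      have e4 : a0 * x1 = 0 := by rw [mul_comm]; exact rule10' h2 hK hee hx1e ha0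
      simp only [add_mul, mul_add, e1, e2, e3, e4, add_zero, zero_add]
  · -- part 3 : invariance under derivations
    intro d hder x0 x1 hx0 hx1
    have hx0e : e * x0 = 0 := by have := hx0.1; rwa [zero_smul] at this
    have hx1e : e * x1 = x1 := by have := hx1.1; rwa [one_smul] at this
    -- d e is in the half space
    obtain ⟨c1, ch, c0, hc1, hch, hc0, hde⟩ := hdecomp (d e)
    have hde2 : d e = e * d e + e * d e := by
      have h := hder e e
      rw [hee, mul_comm (d e) e] at h
      exact h
    have hdeh : e * d e = (2:K)⁻¹ • d e := by
      have hz : c1 + (0:A) + (-c0) = 0 := by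
        have h1 := hde2
        rw [hde] at h1
        have hEc : e * (c1 + ch + c0) = c1 + (2:K)⁻¹ • ch := by
          simp only [mul_add, hc1, hch, hc0, add_zero]
        rw [hEc] at h1
        have hch2 : (2:K)⁻¹ • ch + (2:K)⁻¹ • ch = ch := by
          rw [← two_smul K, smul_smul, mul_inv_cancel₀ h2, one_smul]
        have : c1 + 0 + -c0 = (c1 + (2:K)⁻¹ • ch + (c1 + (2:K)⁻¹ • ch)) - (c1 + ch + c0) := by
          linear_combination (norm := module) -hch2
        rw [this, ← h1, sub_self]
      obtain ⟨hz1, -, hz0⟩ := uniq' h2 hc1 (by rw [mul_zero, smul_zero]) (by rw [mul_neg, hc0, neg_zero]) hz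
      have hc0' : c0 = 0 := by rwa [neg_eq_zero] at hz0
      have hdech : d e = ch := by rw [hde, hz1, hc0', zero_add, add_zero]
      rw [hdech]; exact hch
    -- generic treatment for each of the two components
    have main : ∀ (lam : K) (x : A), (lam = 0 ∨ lam = 1) → memJ e x lam → memJ e (d x) lam := by
      rintro lam x hlam ⟨hxl, hx2⟩
      have hxde : x * d e = 0 := hx2 (d e) hdeh
      have hdx1 : e * d x = lam • d x := by
        have h := hder e x
        rw [hxl, map_smul, mul_comm (d e) x, hxde, zero_add] at h
        exact h.symm
      refine ⟨hdx1, ?_⟩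
      intro z hz
      have hxz : x * z = 0 := hx2 z hz
      have h := hder x z
      rw [hxz, map_zero] at h
      obtain ⟨w1, wh, w0, hw1, hwh, hw0, hdz⟩ := hdecomp (d z)
      have hxwh : x * wh = 0 := hx2 wh hwh
      rcases hlam with rfl | rfl
      · rw [zero_smul] at hxl hdx1
        have hxw1 : x * w1 = 0 := by rw [mul_comm]; exact rule10' h2 hK hee hw1 hxl
        have hv : e * (x * w0) = 0 := rule00' h2 hK hee hxl hw0
        have heq : d x * z = -(x * w0) := by
          have : d x * z + x * d z = 0 := h.symm
          rw [hdz, mul_add, mul_add, hxw1, hxwh, zero_add, zero_add] at this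
          exact eq_neg_of_add_eq_zero_left this
        have hhalf : e * (d x * z) = (2:K)⁻¹ • (d x * z) := ruleH0' h2 hK hee hdx1 hz
        have : (2:K)⁻¹ • (d x * z) = 0 := by
          rw [← hhalf, heq, mul_neg, hv, neg_zero]
        have h4 := congrArg (fun t => (2:K) • t) this
        simpa [smul_smul, mul_inv_cancel₀ h2] using h4
      · rw [one_smul] at hxl hdx1
        have hxw0 : x * w0 = 0 := rule10' h2 hK hee hxl hw0
        have hv : e * (x * w1) = x * w1 := rule11' h2 hK hee hxl hw1
        have heq : d x * z = -(x * w1) := by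
          have : d x * z + x * d z = 0 := h.symm
          rw [hdz, mul_add, mul_add, hxwh, hxw0, add_zero, add_zero] at this
          exact eq_neg_of_add_eq_zero_left this
        have hhalf : e * (d x * z) = (2:K)⁻¹ • (d x * z) := ruleH1' h2 hK hee hdx1 hz
        have hfix : e * (d x * z) = d x * z := by
          rw [heq, mul_neg, hv]
        have h5 : (2:K)⁻¹ • (d x * z) = d x * z := by rw [← hhalf, hfix]
        have h6 := congrArg (fun t => (2:K) • t) h5
        simp only [smul_smul, mul_inv_cancel₀ h2, one_smul] at h6
        -- h6 : d x * z = (2:K) • (d x * z)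
        have h7 : (2:K) • (d x * z) - (d x * z) = 0 := by rw [← h6, sub_self]
        have h8 : (2:K) • (d x * z) - (d x * z) = d x * z := by
          rw [two_smul]; abel
        rw [h8] at h7
        exact h7
    refine ⟨d x0, d x1, main 0 x0 (Or.inl rfl) hx0, main 1 x1 (Or.inr rfl) hx1, by rw [map_add]⟩
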